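/- Let G be a RAN whose clique-tree T contains two degree-4 vertices q_i and q_j that are adjacent in T, with corresponding maximal cliques Q_i, Q_j. Then removing the vertex set Q_i ∪ Q_j from G leaves exactly 6 components, so τ(G) ≤ 5/6 < 1. -/

import Mathlib

open SimpleGraph ENNReal

namespace RanTough

/-- Number of connected components after deleting the vertex set `S` from `G`. -/
noncomputable def compCount {V : Type*} (G : SimpleGraph V) (S : Finset V) : ℕ :=
  Nat.card (G.induce ((↑S : Set V)ᶜ)).ConnectedComponent

/-- `G` is `t`-tough: `t * ω(G - S) ≤ |S|` whenever deleting `S` disconnects `G`. -/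
def IsTough {V : Type*} (G : SimpleGraph V) (t : ℝ≥0∞) : Prop :=
  ∀ S : Finset V, 1 < compCount G S → t * compCount G S ≤ S.card

/-- The toughness of `G`: the largest `t` such that `G` is `t`-tough
(`⊤` for complete graphs). -/
noncomputable def toughness {V : Type*} (G : SimpleGraph V) : ℝ≥0∞ :=
  sSup {t : ℝ≥0∞ | IsTough G t}

/-- A vertex is simplicial if its neighborhood is a clique. -/
def IsSimplicial {V : Type*} (G : SimpleGraph V) (v : V) : Prop :=
  G.IsClique (G.neighborSet v)

/-- `G` is a `k`-tree: there is a construction ordering starting from a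
`(k+1)`-clique in which each later vertex is attached to a `k`-clique
of earlier vertices. -/
def IsKTree {V : Type*} [Fintype V] (k : ℕ) (G : SimpleGraph V) : Prop :=
  k + 1 ≤ Fintype.card V ∧
  ∃ e : Fin (Fintype.card V) ≃ V,
    (∀ i j : Fin (Fintype.card V), (i : ℕ) < k + 1 → (j : ℕ) < k + 1 → i ≠ j →
      G.Adj (e i) (e j)) ∧
    (∀ i : Fin (Fintype.card V), k + 1 ≤ (i : ℕ) →
      ∃ S : Finset V, S.card = k ∧ G.IsClique (S : Set V) ∧
        ∀ w : V, (G.Adj (e i) w ∧ ∃ j, j < i ∧ e j = w) ↔ w ∈ S)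

/-- `Q` is a maximal clique of `G`. -/
def IsMaximalClique {V : Type*} (G : SimpleGraph V) (Q : Finset V) : Prop :=
  G.IsClique (Q : Set V) ∧ ∀ R : Finset V, G.IsClique (R : Set V) → Q ⊆ R → Q = R

/-- A clique-tree of `G`: a tree on the maximal cliques of `G` satisfying the
induced subtree property. -/
def IsCliqueTree {V : Type*} (G : SimpleGraph V)
    (T : SimpleGraph {Q : Finset V // IsMaximalClique G Q}) : Prop :=
  T.IsTree ∧ ∀ v : V,
    (T.induce {Q : {Q : Finset V // IsMaximalClique G Q} | v ∈ (Q : Finset V)}).Connected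

/-- A Random Apollonian Network: a uniquely representable (unique clique-tree) 3-tree. -/
def IsRAN {V : Type*} [Fintype V] (G : SimpleGraph V) : Prop :=
  IsKTree 3 G ∧ ∃! T : SimpleGraph {Q : Finset V // IsMaximalClique G Q}, IsCliqueTree G T

/-- `S` separates the nonadjacent vertices `u` and `v`. -/
def IsUVSeparator {V : Type*} (G : SimpleGraph V) (u v : V) (S : Finset V) : Prop :=
  u ≠ v ∧ ¬ G.Adj u v ∧ u ∉ S ∧ v ∉ S ∧ ∀ p : G.Walk u v, ∃ w ∈ p.support, w ∈ S

/-- `S` is a minimal vertex separator of `G`. -/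
def IsMinVtxSep {V : Type*} (G : SimpleGraph V) (S : Finset V) : Prop :=
  ∃ u v : V, IsUVSeparator G u v S ∧ ∀ S' : Finset V, S' ⊂ S → ¬ IsUVSeparator G u v S'

/-- The multiplicity of `S` as a minimal vertex separator with respect to
the clique-tree `T`: the number of edges of `T` whose endpoint intersection is `S`. -/
noncomputable def sepMultiplicity {V : Type*} [DecidableEq V] (G : SimpleGraph V)
    (T : SimpleGraph {Q : Finset V // IsMaximalClique G Q}) (S : Finset V) : ℕ :=
  {e ∈ T.edgeSet | ∃ Q Q' : {Q : Finset V // IsMaximalClique G Q},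
    e = s(Q, Q') ∧ (Q : Finset V) ∩ (Q' : Finset V) = S}.ncard

/-- Degree of a vertex in a graph, via `Set.ncard` (no instances needed). -/
noncomputable def deg {α : Type*} (T : SimpleGraph α) (q : α) : ℕ :=
  {r | T.Adj q r}.ncard

/-- A `k`-regular tree: every vertex that is not a leaf has degree `k`. -/
def IsRegularTree {α : Type*} (k : ℕ) (T : SimpleGraph α) : Prop :=
  T.IsTree ∧ ∀ q : α, deg T q = 1 ∨ deg T q = k

/-- Chordal: every cycle of length at least 4 has a chord. -/
def IsChordal {V : Type*} (G : SimpleGraph V) : Prop :=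
  ∀ (v : V) (c : G.Walk v v), c.IsCycle → 4 ≤ c.length →
    ∃ x y : V, x ∈ c.support ∧ y ∈ c.support ∧ G.Adj x y ∧ s(x, y) ∉ c.edges

/-- `H` is a minor of `G`. -/
def IsMinor {W V : Type*} (H : SimpleGraph W) (G : SimpleGraph V) : Prop :=
  ∃ B : W → Set V,
    (∀ w, (G.induce (B w)).Connected) ∧
    (∀ w₁ w₂, w₁ ≠ w₂ → Disjoint (B w₁) (B w₂)) ∧
    (∀ w₁ w₂, H.Adj w₁ w₂ → ∃ u ∈ B w₁, ∃ v ∈ B w₂, G.Adj u v)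

/-- Planar (Wagner): no `K₅` and no `K₃,₃` minor. -/
def IsPlanar {V : Type*} (G : SimpleGraph V) : Prop :=
  ¬ IsMinor (⊤ : SimpleGraph (Fin 5)) G ∧
  ¬ IsMinor (completeBipartiteGraph (Fin 3) (Fin 3)) G

end RanTough

open RanTough
open SimpleGraph


namespace RanHelp

variable {α : Type*}

/-- Walk in induced subgraph gives ambient walk with support in the set. -/
lemma induce_walk_spec {H : SimpleGraph α} {s : Set α} :
    ∀ {a b : ↥s} (_ : (H.induce s).Walk a b),
      ∃ p : H.Walk a.1 b.1, ∀ x ∈ p.support, x ∈ s := by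
  intro a b w
  induction w with
  | nil => exact ⟨SimpleGraph.Walk.nil, by simp [Subtype.coe_prop]⟩
  | @cons x y z h w ih =>
    obtain ⟨p, hp⟩ := ih
    have hadj : H.Adj x.1 y.1 := h
    exact ⟨SimpleGraph.Walk.cons hadj p, by
      intro u hu
      rcases (SimpleGraph.Walk.mem_support_iff _).1 hu with rfl | hu'
      · exact x.2
      · exact hp u (by rwa [SimpleGraph.Walk.support_cons, List.tail_cons] at hu')⟩

/-- Ambient walk with support in a set gives reachability in induced subgraph. -/
lemma walk_to_induce {H : SimpleGraph α} {s : Set α} :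
    ∀ {a b : α} (p : H.Walk a b) (_ : ∀ x ∈ p.support, x ∈ s),
      (H.induce s).Reachable ⟨a, by simp_all [SimpleGraph.Walk.start_mem_support]⟩
        ⟨b, by simp_all [SimpleGraph.Walk.end_mem_support]⟩ := by
  intro a b p
  induction p with
  | nil => intro _; rfl
  | @cons x y z h p ih =>
    intro hs
    have hy : y ∈ s := hs y (by simp)
    have hx : x ∈ s := hs x (by simp)
    have h1 : (H.induce s).Adj ⟨x, hx⟩ ⟨y, hy⟩ := h
    exact (SimpleGraph.Adj.reachable h1).trans (ih (fun u hu => hs u (by simp [hu])))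

/-- Transform reachability along a step-wise reachability hypothesis. -/
lemma reach_transform {X Y : SimpleGraph α}
    (hstep : ∀ a b, X.Adj a b → Y.Reachable a b) :
    ∀ {a b : α}, X.Reachable a b → Y.Reachable a b := by
  intro a b ⟨w⟩
  induction w with
  | nil => rfl
  | cons h p ih => exact (hstep _ _ h).trans ih

end RanHelp
namespace RanHelp

open RanTough Finset

variable {V : Type*} [Fintype V] [DecidableEq V] {G : SimpleGraph V}

lemma clique_card_le (hKT : IsKTree 3 G) (C : Finset V) (hC : G.IsClique (C : Set V)) :
    C.card ≤ 4 := by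
  by_contra hlt
  push_neg at hlt
  obtain ⟨D, hDC, hD5⟩ := Finset.exists_subset_card_eq (by omega : 5 ≤ C.card)
  have hD : G.IsClique (D : Set V) := hC.subset (by exact_mod_cast hDC)
  obtain ⟨hcard, e, hbase, hstep⟩ := hKT
  set I : Finset (Fin (Fintype.card V)) := D.image e.symm with hI
  have hIcard : I.card = 5 := by
    rw [hI, Finset.card_image_of_injective _ e.symm.injective, hD5]
  have hIne : I.Nonempty := by rw [← Finset.card_pos, hIcard]; omega
  set i₀ := I.max' hIne with hi₀
  have hi₀I : i₀ ∈ I := I.max'_mem hIne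
  obtain ⟨d₀, hd₀D, hd₀⟩ := Finset.mem_image.1 hi₀I
  have hed₀ : e i₀ = d₀ := by rw [← hd₀]; exact e.apply_symm_apply d₀
  by_cases h4 : 4 ≤ (i₀ : ℕ)
  · obtain ⟨S, hS3, hSclique, hIff⟩ := hstep i₀ h4
    have hsub : D.erase (e i₀) ⊆ S := by
      intro w hw
      have hwD : w ∈ D := Finset.mem_of_mem_erase hw
      have hne : w ≠ e i₀ := Finset.ne_of_mem_erase hw
      have hmem₀ : e i₀ ∈ (D : Set V) := by rw [hed₀]; exact_mod_cast hd₀D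
      have hmemw : w ∈ (D : Set V) := by exact_mod_cast hwD
      have hadj : G.Adj (e i₀) w := hD hmem₀ hmemw (fun h => hne h.symm)
      refine (hIff w).1 ⟨hadj, e.symm w, ?_, e.apply_symm_apply w⟩
      have hjI : e.symm w ∈ I := Finset.mem_image_of_mem _ hwD
      have hle : e.symm w ≤ i₀ := I.le_max' _ hjI
      have hne' : e.symm w ≠ i₀ := by
        intro h; apply hne; rw [← h, e.apply_symm_apply]
      exact lt_of_le_of_ne hle hne'
    have h1 : (D.erase (e i₀)).card = 4 := by
      rw [Finset.card_erase_of_mem (by rw [hed₀]; exact hd₀D), hD5]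
    have := Finset.card_le_card hsub
    omega
  · push_neg at h4
    have hsub : ∀ j ∈ I, (j : ℕ) ≤ 3 := by
      intro j hj
      have := I.le_max' _ hj
      omega
    have : I.card ≤ (Finset.univ : Finset (Fin 4)).card := by
      refine Finset.card_le_card_of_injOn (fun j => (⟨min (j : ℕ) 3, by omega⟩ : Fin 4))
        (fun j _ => Finset.mem_univ _) ?_
      intro j hj j' hj' hjj'
      have h1 : min (j : ℕ) 3 = (j : ℕ) := by
        have := hsub j hj; omega
      have h2 : min (j' : ℕ) 3 = (j' : ℕ) := by
        have := hsub j' hj'; omega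
      have h3 : min (j : ℕ) 3 = min (j' : ℕ) 3 := congrArg Fin.val hjj'
      exact Fin.ext (by omega)
    simp at this
    omega

lemma maxclique_card (hKT : IsKTree 3 G) {Q : Finset V} (hQ : IsMaximalClique G Q) :
    Q.card = 4 := by
  obtain ⟨hcard, e, hbase, hstep⟩ := hKT
  set F4 : Finset V := (Finset.univ : Finset (Fin 4)).image (fun i => e (Fin.castLE hcard i))
    with hF4
  have hinjF4 : Function.Injective (fun i : Fin 4 => e (Fin.castLE hcard i)) :=
    fun a b hab => Fin.castLE_injective _ (e.injective hab)
  have hF4card : F4.card = 4 := by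
    rw [hF4, Finset.card_image_of_injective _ hinjF4, Finset.card_univ, Fintype.card_fin]
  have hF4clique : G.IsClique (F4 : Set V) := by
    intro x hx y hy hxy
    simp only [hF4, Finset.coe_image, Set.mem_image, Finset.mem_coe, Finset.mem_image] at hx hy
    obtain ⟨i, _, rfl⟩ := hx
    obtain ⟨j, _, rfl⟩ := hy
    refine hbase _ _ (by simpa using i.isLt) (by simpa using j.isLt) ?_
    intro h; exact hxy (by rw [h])
  suffices h : ∃ K : Finset V, G.IsClique (K : Set V) ∧ K.card = 4 ∧ Q ⊆ K by
    obtain ⟨K, hK1, hK2, hK3⟩ := h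
    rw [hQ.2 K hK1 hK3]; exact hK2
  rcases Finset.eq_empty_or_nonempty Q with rfl | hQne
  · exact ⟨F4, hF4clique, hF4card, Finset.empty_subset _⟩
  set I : Finset (Fin (Fintype.card V)) := Q.image e.symm with hI
  have hIne : I.Nonempty := hQne.image _
  set i₀ := I.max' hIne with hi₀
  have hi₀I : i₀ ∈ I := I.max'_mem hIne
  obtain ⟨d₀, hd₀D, hd₀⟩ := Finset.mem_image.1 hi₀I
  have hed₀ : e i₀ = d₀ := by rw [← hd₀]; exact e.apply_symm_apply d₀
  by_cases h4 : 4 ≤ (i₀ : ℕ)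
  · obtain ⟨S, hS3, hSclique, hIff⟩ := hstep i₀ h4
    have hei₀S : e i₀ ∉ S := by
      intro h
      exact G.irrefl ((hIff (e i₀)).2 h).1
    refine ⟨insert (e i₀) S, ?_, ?_, ?_⟩
    · intro x hx y hy hxy
      simp only [Finset.coe_insert, Set.mem_insert_iff, Finset.mem_coe] at hx hy
      rcases hx with rfl | hx
      · rcases hy with rfl | hy
        · exact absurd rfl hxy
        · exact ((hIff y).2 hy).1
      · rcases hy with rfl | hy
        · exact ((hIff x).2 hx).1.symm
        · exact hSclique hx hy hxy
    · rw [Finset.card_insert_of_notMem hei₀S, hS3]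
    · intro w hw
      by_cases hwi : w = e i₀
      · simp [hwi]
      · have hadj : G.Adj (e i₀) w := by
          refine hQ.1 (by rw [hed₀]; exact_mod_cast hd₀D) (by exact_mod_cast hw) ?_
          intro h; exact hwi h.symm
        have hwS : w ∈ S := by
          refine (hIff w).1 ⟨hadj, e.symm w, ?_, e.apply_symm_apply w⟩
          have hjI : e.symm w ∈ I := Finset.mem_image_of_mem _ hw
          have hle : e.symm w ≤ i₀ := I.le_max' _ hjI
          refine lt_of_le_of_ne hle ?_
          intro h; apply hwi; rw [← h, e.apply_symm_apply]
        simp [hwS]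
  · push_neg at h4
    refine ⟨F4, hF4clique, hF4card, ?_⟩
    intro w hw
    have hjI : e.symm w ∈ I := Finset.mem_image_of_mem _ hw
    have hle : (e.symm w : ℕ) ≤ 3 := by
      have := I.le_max' _ hjI
      omega
    rw [hF4]
    refine Finset.mem_image.2 ⟨⟨(e.symm w : ℕ), by omega⟩, Finset.mem_univ _, ?_⟩
    have : Fin.castLE hcard ⟨(e.symm w : ℕ), by omega⟩ = e.symm w := by
      apply Fin.ext; simp [Fin.castLE]
    rw [this, e.apply_symm_apply]

lemma avoid_walk (hKT : IsKTree 3 G) (S : Finset V) (hS : S.card ≤ 2)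
    (u v : V) (hu : u ∉ S) (hv : v ∉ S) :
    ∃ w : G.Walk u v, ∀ x ∈ w.support, x ∉ S := by
  obtain ⟨hcard, e, hbase, hstep⟩ := hKT
  set F4 : Finset V := (Finset.univ : Finset (Fin 4)).image (fun i => e (Fin.castLE hcard i))
    with hF4
  have hinjF4 : Function.Injective (fun i : Fin 4 => e (Fin.castLE hcard i)) :=
    fun a b hab => Fin.castLE_injective _ (e.injective hab)
  have hF4card : F4.card = 4 := by
    rw [hF4, Finset.card_image_of_injective _ hinjF4, Finset.card_univ, Fintype.card_fin]
  have hne : (F4 \ S).Nonempty := by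
    rw [← Finset.card_pos]
    have := Finset.le_card_sdiff S F4
    omega
  obtain ⟨a, ha⟩ := hne
  have ha4 : a ∈ F4 := (Finset.mem_sdiff.1 ha).1
  have haS : a ∉ S := (Finset.mem_sdiff.1 ha).2
  obtain ⟨k, _, hk⟩ := Finset.mem_image.1 ha4
  have main : ∀ m : ℕ, ∀ i : Fin (Fintype.card V), (i : ℕ) ≤ m → e i ∉ S →
      ∃ w : G.Walk (e i) a, ∀ x ∈ w.support, x ∉ S := by
    intro m
    induction m with
    | zero =>
      intro i hi hiS
      by_cases hia : e i = a
      · subst hia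
        exact ⟨SimpleGraph.Walk.nil, by simpa using hiS⟩
      · have hadj : G.Adj (e i) a := by
          rw [← hk]
          refine hbase _ _ (by omega) (by simpa using k.isLt) ?_
          intro h; apply hia; rw [h, hk]
        exact ⟨SimpleGraph.Walk.cons hadj SimpleGraph.Walk.nil, by
          intro x hx
          simp only [SimpleGraph.Walk.support_cons, SimpleGraph.Walk.support_nil,
            List.mem_cons, List.mem_singleton] at hx
          rcases hx with rfl | hx
          · exact hiS
          · rcases hx with rfl | hx
            · exact haS
            · simp at hx⟩
    | succ m ih =>
      intro i hi hiS
      by_cases h3 : (i : ℕ) ≤ 3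
      · by_cases hia : e i = a
        · subst hia
          exact ⟨SimpleGraph.Walk.nil, by simpa using hiS⟩
        · have hadj : G.Adj (e i) a := by
            rw [← hk]
            refine hbase _ _ (by omega) (by simpa using k.isLt) ?_
            intro h; apply hia; rw [h, hk]
          exact ⟨SimpleGraph.Walk.cons hadj SimpleGraph.Walk.nil, by
            intro x hx
            simp only [SimpleGraph.Walk.support_cons, SimpleGraph.Walk.support_nil,
              List.mem_cons, List.mem_singleton] at hx
            rcases hx with rfl | hx
            · exact hiS
            · rcases hx with rfl | hx
              · exact haS
              · simp at hx⟩
      · push_neg at h3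
        obtain ⟨Si, hSi3, _, hIff⟩ := hstep i (by omega)
        have : ¬ Si ⊆ S := by
          intro h
          have := Finset.card_le_card h
          omega
        obtain ⟨w', hw'Si, hw'S⟩ := Finset.not_subset.1 this
        obtain ⟨hadj, j, hji, rfl⟩ := (hIff w').2 hw'Si
        obtain ⟨p, hp⟩ := ih j (by have : (j:ℕ) < (i:ℕ) := hji; omega) hw'S
        exact ⟨SimpleGraph.Walk.cons hadj p, by
          intro x hx
          simp only [SimpleGraph.Walk.support_cons, List.mem_cons] at hx
          rcases hx with rfl | hx
          · exact hiS
          · exact hp x hx⟩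
  obtain ⟨wu, hwu⟩ := main (Fintype.card V) (e.symm u) (le_of_lt (Fin.is_lt _)) (by
    rwa [e.apply_symm_apply])
  obtain ⟨wv, hwv⟩ := main (Fintype.card V) (e.symm v) (le_of_lt (Fin.is_lt _)) (by
    rwa [e.apply_symm_apply])
  refine ⟨(wu.copy (e.apply_symm_apply u) rfl).append
    ((wv.copy (e.apply_symm_apply v) rfl).reverse), ?_⟩
  intro x hx
  rcases (SimpleGraph.Walk.mem_support_append_iff _ _).1 hx with hx | hx
  · rw [SimpleGraph.Walk.support_copy] at hx
    exact hwu x hx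
  · rw [SimpleGraph.Walk.support_reverse, List.mem_reverse,
      SimpleGraph.Walk.support_copy] at hx
    exact hwv x hx

lemma exists_max_clique_superset (G : SimpleGraph V) (C : Finset V)
    (hC : G.IsClique (C : Set V)) :
    ∃ Q : Finset V, IsMaximalClique G Q ∧ C ⊆ Q := by
  classical
  set 𝒮 := Finset.univ.filter (fun R : Finset V => G.IsClique (R : Set V) ∧ C ⊆ R) with h𝒮
  have hC𝒮 : C ∈ 𝒮 := by simp [h𝒮, hC]
  obtain ⟨R, hR, hmax⟩ := Finset.exists_max_image 𝒮 Finset.card ⟨C, hC𝒮⟩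
  simp only [h𝒮, Finset.mem_filter, Finset.mem_univ, true_and] at hR
  refine ⟨R, ⟨hR.1, ?_⟩, hR.2⟩
  intro R' hR'c hsub
  refine Finset.eq_of_subset_of_card_le hsub (hmax R' ?_)
  simp only [h𝒮, Finset.mem_filter, Finset.mem_univ, true_and]
  exact ⟨hR'c, hR.2.trans hsub⟩

lemma exists_max_clique_mem (G : SimpleGraph V) (v : V) :
    ∃ Q : Finset V, IsMaximalClique G Q ∧ v ∈ Q := by
  obtain ⟨Q, hQ, hsub⟩ := exists_max_clique_superset G {v} (by
    intro x hx y hy hxy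
    simp only [Finset.coe_singleton, Set.mem_singleton_iff] at hx hy
    exact absurd (hx.trans hy.symm) hxy)
  exact ⟨Q, hQ, hsub (Finset.mem_singleton_self v)⟩

lemma exists_max_clique_pair (G : SimpleGraph V) {u v : V} (huv : G.Adj u v) :
    ∃ Q : Finset V, IsMaximalClique G Q ∧ u ∈ Q ∧ v ∈ Q := by
  obtain ⟨Q, hQ, hsub⟩ := exists_max_clique_superset G {u, v} (by
    intro x hx y hy hxy
    simp only [Finset.coe_insert, Finset.coe_singleton, Set.mem_insert_iff,
      Set.mem_singleton_iff] at hx hy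
    rcases hx with rfl | rfl <;> rcases hy with rfl | rfl
    · exact absurd rfl hxy
    · exact huv
    · exact huv.symm
    · exact absurd rfl hxy)
  exact ⟨Q, hQ, hsub (by simp), hsub (by simp)⟩

end RanHelp
namespace RanHelp

open RanTough SimpleGraph

variable {V : Type*} [Fintype V] [DecidableEq V] {G : SimpleGraph V}
  {T : SimpleGraph {Q : Finset V // IsMaximalClique G Q}}

/-- Key structural lemma: across any edge of a clique tree of a 3-tree, the
intersection has exactly 3 vertices, and private vertices of the two endpoints
are nonadjacent. -/
lemma edge_inter (hKT : IsKTree 3 G) (hT : IsCliqueTree G T)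
    {A B : {Q : Finset V // IsMaximalClique G Q}} (hAB : T.Adj A B) :
    ((A : Finset V) ∩ (B : Finset V)).card = 3 ∧
    ∀ u ∈ (A : Finset V), u ∉ (B : Finset V) → ∀ v ∈ (B : Finset V),
      v ∉ (A : Finset V) → ¬ G.Adj u v := by
  classical
  have hTree := hT.1
  set Td := T.deleteEdges {s(A, B)} with hTd
  have hTdE : ∀ {x y : {Q : Finset V // IsMaximalClique G Q}},
      T.Adj x y → s(x, y) ≠ s(A, B) → Td.Adj x y := by
    intro x y h he
    rw [hTd, SimpleGraph.deleteEdges_adj]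
    exact ⟨h, by simpa using he⟩
  have walk_del : ∀ {X Y : {Q : Finset V // IsMaximalClique G Q}} (w : T.Walk X Y),
      Td.Reachable X Y ∨
      ((Td.Reachable X A ∨ Td.Reachable X B) ∧ (Td.Reachable A Y ∨ Td.Reachable B Y)) := by
    intro X Y w
    induction w with
    | nil => exact Or.inl (SimpleGraph.Reachable.refl _)
    | @cons x y z h p ih =>
      by_cases he : s(x, y) = s(A, B)
      · rw [Sym2.eq_iff] at he
        have hyz : Td.Reachable A z ∨ Td.Reachable B z := by
          rcases ih with h' | h'
          · rcases he with ⟨rfl, rfl⟩ | ⟨rfl, rfl⟩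
            · exact Or.inr h'
            · exact Or.inl h'
          · exact h'.2
        rcases he with ⟨rfl, rfl⟩ | ⟨rfl, rfl⟩
        · exact Or.inr ⟨Or.inl (SimpleGraph.Reachable.refl _), hyz⟩
        · exact Or.inr ⟨Or.inr (SimpleGraph.Reachable.refl _), hyz⟩
      · have hadj := hTdE h he
        rcases ih with h' | h'
        · exact Or.inl (hadj.reachable.trans h')
        · refine Or.inr ⟨?_, h'.2⟩
          rcases h'.1 with h'' | h''
          · exact Or.inl (hadj.reachable.trans h'')
          · exact Or.inr (hadj.reachable.trans h'')
  have notReach : ¬ Td.Reachable A B := by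
    rintro ⟨p⟩
    have hps : ∀ e ∈ p.edges, e ∈ T.edgeSet := by
      intro e he
      have h1 := p.edges_subset_edgeSet he
      rw [hTd, SimpleGraph.edgeSet_deleteEdges] at h1
      exact h1.1
    set q := (p.transfer T hps).toPath with hq
    have hqe : s(A, B) ∉ (q : T.Walk A B).edges := by
      intro h
      have h2 := SimpleGraph.Walk.edges_toPath_subset _ h
      rw [SimpleGraph.Walk.edges_transfer] at h2
      have h3 := p.edges_subset_edgeSet h2
      rw [hTd, SimpleGraph.edgeSet_deleteEdges] at h3
      exact h3.2 (by simp)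
    have huniq := hTree.IsAcyclic.path_unique q (SimpleGraph.Path.singleton hAB)
    apply hqe
    rw [huniq]
    exact SimpleGraph.Path.mk'_mem_edges_singleton hAB
  have reach_or : ∀ X : {Q : Finset V // IsMaximalClique G Q},
      Td.Reachable X A ∨ Td.Reachable X B := by
    intro X
    obtain ⟨w⟩ := hTree.isConnected.preconnected X A
    rcases walk_del w with h | h
    · exact Or.inl h
    · exact h.1
  set VA : Set V := {v | ∃ X : {Q : Finset V // IsMaximalClique G Q},
    v ∈ (X : Finset V) ∧ Td.Reachable X A} with hVA
  set VB : Set V := {v | ∃ X : {Q : Finset V // IsMaximalClique G Q},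
    v ∈ (X : Finset V) ∧ Td.Reachable X B} with hVB
  have hVAB : ∀ v : V, v ∈ VA → v ∈ VB → v ∈ (A : Finset V) ∧ v ∈ (B : Finset V) := by
    rintro v ⟨X, hvX, hXA⟩ ⟨Y, hvY, hYB⟩
    have hconn := hT.2 v
    obtain ⟨w⟩ := hconn.preconnected ⟨X, hvX⟩ ⟨Y, hvY⟩
    obtain ⟨p, hp⟩ := RanHelp.induce_walk_spec w
    by_cases he : s(A, B) ∈ p.edges
    · exact ⟨hp A (SimpleGraph.Walk.fst_mem_support_of_mem_edges p he),
        hp B (SimpleGraph.Walk.snd_mem_support_of_mem_edges p he)⟩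
    · exfalso
      apply notReach
      have hTd_edges : ∀ e ∈ p.edges, e ∈ Td.edgeSet := by
        intro e hep
        rw [hTd, SimpleGraph.edgeSet_deleteEdges]
        refine ⟨p.edges_subset_edgeSet hep, ?_⟩
        intro hmem
        rw [Set.mem_singleton_iff] at hmem
        exact he (hmem ▸ hep)
      have hXY : Td.Reachable X Y := ⟨p.transfer Td hTd_edges⟩
      exact (hXA.symm.trans hXY).trans hYB
  have hcover : ∀ v : V, v ∈ VA ∨ v ∈ VB := by
    intro v
    obtain ⟨Q, hQ, hvQ⟩ := RanHelp.exists_max_clique_mem G v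
    rcases reach_or ⟨Q, hQ⟩ with h | h
    · exact Or.inl ⟨⟨Q, hQ⟩, hvQ, h⟩
    · exact Or.inr ⟨⟨Q, hQ⟩, hvQ, h⟩
  have hAne : (A : Finset V) ≠ (B : Finset V) := fun h => hAB.ne (Subtype.ext h)
  have hnsubAB : ¬ (A : Finset V) ⊆ (B : Finset V) := fun h => hAne (A.2.2 _ B.2.1 h)
  have hnsubBA : ¬ (B : Finset V) ⊆ (A : Finset V) := fun h => hAne (B.2.2 _ A.2.1 h).symm
  obtain ⟨u, huA, huB⟩ := Finset.not_subset.1 hnsubAB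
  obtain ⟨v', hvB, hvA⟩ := Finset.not_subset.1 hnsubBA
  have huVA : u ∈ VA := ⟨A, huA, SimpleGraph.Reachable.refl _⟩
  have hvVB : v' ∈ VB := ⟨B, hvB, SimpleGraph.Reachable.refl _⟩
  have huVB : u ∉ VB := fun h => huB (hVAB u huVA h).2
  have hnonadj : ∀ u ∈ (A : Finset V), u ∉ (B : Finset V) → ∀ v ∈ (B : Finset V),
      v ∉ (A : Finset V) → ¬ G.Adj u v := by
    intro a haA haB b hbB hbA hadj
    obtain ⟨Q, hQ, hu, hv⟩ := RanHelp.exists_max_clique_pair G hadj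
    rcases reach_or ⟨Q, hQ⟩ with h | h
    · exact hbA (hVAB b ⟨⟨Q, hQ⟩, hv, h⟩ ⟨B, hbB, SimpleGraph.Reachable.refl _⟩).1
    · exact haB (hVAB a ⟨A, haA, SimpleGraph.Reachable.refl _⟩ ⟨⟨Q, hQ⟩, hu, h⟩).2
  have hcard3 : 3 ≤ ((A : Finset V) ∩ (B : Finset V)).card := by
    by_contra hlt
    push_neg at hlt
    obtain ⟨w, hw⟩ := avoid_walk hKT ((A : Finset V) ∩ (B : Finset V)) (by omega) u v'
      (fun h => huB (Finset.mem_inter.1 h).2) (fun h => hvA (Finset.mem_inter.1 h).1)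
    have key : ∀ {x z : V} (p : G.Walk x z),
        (∀ y ∈ p.support, y ∉ (A : Finset V) ∩ (B : Finset V)) → x ∈ VA → x ∉ VB →
          z ∈ VA ∧ z ∉ VB := by
      intro x z p
      induction p with
      | nil =>
        intro _ hxa hxb
        exact ⟨hxa, hxb⟩
      | @cons x y z h p ih =>
        intro hsup hxa hxb
        have hy_notAB : y ∉ (A : Finset V) ∩ (B : Finset V) := hsup y (by simp)
        by_cases hyB : y ∈ VB
        · exfalso
          have hyA : y ∉ VA := fun hyA =>
            hy_notAB (Finset.mem_inter.2 (hVAB y hyA hyB))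
          obtain ⟨Q, hQ, hu', hv'⟩ := RanHelp.exists_max_clique_pair G h
          rcases reach_or ⟨Q, hQ⟩ with hr | hr
          · exact hyA ⟨⟨Q, hQ⟩, hv', hr⟩
          · exact hxb ⟨⟨Q, hQ⟩, hu', hr⟩
        · have hyA : y ∈ VA := (hcover y).resolve_right hyB
          exact ih (fun w hw' => hsup w (by simp [hw'])) hyA hyB
    have hv'side := key w hw huVA huVB
    exact hv'side.2 hvVB
  have hA4 : (A : Finset V).card = 4 := maxclique_card hKT A.2
  have hss : (A : Finset V) ∩ (B : Finset V) ⊂ (A : Finset V) :=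
    ⟨Finset.inter_subset_left, fun hc => huB (Finset.mem_inter.1 (hc huA)).2⟩
  have := Finset.card_lt_card hss
  exact ⟨by omega, hnonadj⟩

end RanHelp
namespace RanHelp

open RanTough SimpleGraph

section Rehang

variable {V : Type*} [Fintype V] [DecidableEq V] {G : SimpleGraph V}
  {T : SimpleGraph {Q : Finset V // IsMaximalClique G Q}}

/-- Lift a walk avoiding a bad edge, with support in `s`, to reachability in the
induced subgraph of a graph containing all non-bad edges. -/
lemma lift_avoid {α : Type*} {X Y : SimpleGraph α} {s : Set α} {bad : Sym2 α}
    (hstep : ∀ {x y : α}, X.Adj x y → s(x, y) ≠ bad → Y.Adj x y) :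
    ∀ {x y : α} (w : X.Walk x y) (hx : x ∈ s) (hy : y ∈ s), bad ∉ w.edges →
      (∀ z ∈ w.support, z ∈ s) → (Y.induce s).Reachable ⟨x, hx⟩ ⟨y, hy⟩ := by
  intro x y w
  induction w with
  | nil => intro hx hy _ _; rfl
  | @cons a b c h p ih =>
    intro hx hy hbad hsup
    have hb : b ∈ s := hsup b (by simp)
    have h1 : s(a, b) ≠ bad := by
      intro hh; exact hbad (by rw [SimpleGraph.Walk.edges_cons, hh]; simp)
    have h2 : bad ∉ p.edges := fun hh => hbad (by simp [SimpleGraph.Walk.edges_cons, hh])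
    have hadj : (Y.induce s).Adj ⟨a, hx⟩ ⟨b, hb⟩ := hstep h h1
    exact hadj.reachable.trans (ih hb hy h2 (fun z hz => hsup z (by simp [hz])))

lemma rehang (hKT : IsKTree 3 G) (hT : IsCliqueTree G T)
    (huniq : ∀ T'' : SimpleGraph {Q : Finset V // IsMaximalClique G Q},
      IsCliqueTree G T'' → T'' = T)
    {q A B : {Q : Finset V // IsMaximalClique G Q}} (hAB : T.Adj A B)
    (hAq : A ≠ q) (hBq : B ≠ q)
    (hsub : (A : Finset V) ∩ (B : Finset V) ⊆ (q : Finset V)) : False := by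
  classical
  have hTree := hT.1
  have hacyc := hTree.IsAcyclic
  obtain ⟨P₀, hP₀, hP₀uniq⟩ := hTree.existsUnique_path q A
  obtain ⟨C, D, hCD, hCq, hDq, hCDint, P, hPpath, hPedge⟩ :
      ∃ C D : {Q : Finset V // IsMaximalClique G Q}, T.Adj C D ∧ C ≠ q ∧ D ≠ q ∧
        ((C : Finset V) ∩ (D : Finset V) ⊆ (q : Finset V)) ∧
        ∃ P : T.Walk q C, P.IsPath ∧ s(C, D) ∉ P.edges := by
    by_cases hmem : s(A, B) ∈ P₀.edges
    · have hBsup : B ∈ P₀.support := SimpleGraph.Walk.snd_mem_support_of_mem_edges P₀ hmem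
      refine ⟨B, A, hAB.symm, hBq, hAq, ?_, P₀.takeUntil B hBsup, hP₀.takeUntil hBsup, ?_⟩
      · rw [Finset.inter_comm]; exact hsub
      · intro h
        have hA : A ∈ (P₀.takeUntil B hBsup).support :=
          SimpleGraph.Walk.snd_mem_support_of_mem_edges _ (by rwa [Sym2.eq_swap] at h)
        have hnodup : ((P₀.takeUntil B hBsup).append (P₀.dropUntil B hBsup)).support.Nodup := by
          rw [SimpleGraph.Walk.take_spec P₀ hBsup]; exact hP₀.support_nodup
        rw [SimpleGraph.Walk.support_append, List.nodup_append] at hnodup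
        have hAd : A ∈ (P₀.dropUntil B hBsup).support := SimpleGraph.Walk.end_mem_support _
        rw [SimpleGraph.Walk.support_eq_cons (P₀.dropUntil B hBsup)] at hAd
        rcases hAd with _ | hAd
        · exact hAB.ne rfl
        · exact hnodup.2.2 A hA A (by assumption) rfl
    · exact ⟨A, B, hAB, hAq, hBq, hsub, P₀, hP₀, hmem⟩
  have hDP : D ∉ P.support := by
    intro hD
    have hdu : (P.dropUntil D hD).IsPath := hPpath.dropUntil hD
    have heq := hacyc.path_unique ⟨P.dropUntil D hD, hdu⟩ (SimpleGraph.Path.singleton hCD.symm)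
    apply hPedge
    have heq' : P.dropUntil D hD = (SimpleGraph.Path.singleton hCD.symm : T.Walk D C) :=
      congrArg Subtype.val heq
    have hmem : s(D, C) ∈ (P.dropUntil D hD).edges := by
      rw [heq']; exact SimpleGraph.Path.mk'_mem_edges_singleton hCD.symm
    have := SimpleGraph.Walk.edges_dropUntil_subset P hD hmem
    rwa [Sym2.eq_swap] at this
  have hqD : ¬ T.Adj q D := by
    intro h
    have hqC : q ≠ C := fun hh => hCq hh.symm
    have hp2 : (SimpleGraph.Walk.cons h (SimpleGraph.Walk.cons hCD.symm
        SimpleGraph.Walk.nil) : T.Walk q C).IsPath := by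
      simp [SimpleGraph.Walk.isPath_def, h.ne, hCD.ne', hqC, hCD.ne]
    have heq := hacyc.path_unique ⟨P, hPpath⟩ ⟨_, hp2⟩
    apply hPedge
    have heq' : P = (SimpleGraph.Walk.cons h (SimpleGraph.Walk.cons hCD.symm
        SimpleGraph.Walk.nil) : T.Walk q C) := congrArg Subtype.val heq
    rw [heq']
    simp [SimpleGraph.Walk.edges_cons, Sym2.eq_swap]
  set T' : SimpleGraph {Q : Finset V // IsMaximalClique G Q} :=
    { Adj := fun x y => (T.Adj x y ∧ s(x, y) ≠ s(C, D)) ∨ (x = q ∧ y = D) ∨ (x = D ∧ y = q)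
      symm := ⟨by
        rintro x y (⟨h1, h2⟩ | ⟨rfl, rfl⟩ | ⟨rfl, rfl⟩)
        · exact Or.inl ⟨h1.symm, by rwa [Sym2.eq_swap]⟩
        · exact Or.inr (Or.inr ⟨rfl, rfl⟩)
        · exact Or.inr (Or.inl ⟨rfl, rfl⟩)⟩
      loopless := ⟨by
        rintro x (⟨h1, _⟩ | ⟨rfl, rfl⟩ | ⟨rfl, rfl⟩)
        · exact T.irrefl h1
        · exact hDq rfl
        · exact hDq rfl⟩ } with hT'def
  have hT'qD : T'.Adj q D := Or.inr (Or.inl ⟨rfl, rfl⟩)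
  have hT'_of : ∀ {x y : {Q : Finset V // IsMaximalClique G Q}},
      T.Adj x y → s(x, y) ≠ s(C, D) → T'.Adj x y := fun h hne => Or.inl ⟨h, hne⟩
  have hqDne : s(q, D) ≠ s(C, D) := by
    intro h
    rw [Sym2.eq_iff] at h
    rcases h with ⟨h1, h2⟩ | ⟨h1, h2⟩
    · exact hCq h1.symm
    · exact T.irrefl (h2 ▸ hCD)
  have lift_walk : ∀ {x y : {Q : Finset V // IsMaximalClique G Q}} (w : T.Walk x y),
      s(C, D) ∉ w.edges → T'.Reachable x y := by
    intro x y w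
    induction w with
    | nil => intro _; rfl
    | @cons a b c h p ih =>
      intro hne
      have h1 : s(a, b) ≠ s(C, D) := fun hh => hne (by rw [SimpleGraph.Walk.edges_cons, hh]; simp)
      have h2 : s(C, D) ∉ p.edges := fun hh => hne (by simp [SimpleGraph.Walk.edges_cons, hh])
      exact ((hT'_of h h1).reachable).trans (ih h2)
  have hreach_Cq : T'.Reachable C q := (lift_walk P hPedge).symm
  have hreach_CD : T'.Reachable C D := hreach_Cq.trans hT'qD.reachable
  have hT'conn : T'.Connected := by
    haveI : Nonempty {Q : Finset V // IsMaximalClique G Q} := ⟨q⟩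
    refine ⟨fun x y => ?_⟩
    refine reach_transform (X := T) ?_ (hTree.isConnected.preconnected x y)
    intro a b hab
    by_cases he : s(a, b) = s(C, D)
    · rw [Sym2.eq_iff] at he
      rcases he with ⟨rfl, rfl⟩ | ⟨rfl, rfl⟩
      · exact hreach_CD
      · exact hreach_CD.symm
    · exact (hT'_of hab he).reachable
  have hbridge : T'.IsBridge s(q, D) := by
    rw [SimpleGraph.isBridge_iff_forall_walk_mem_edges]
    intro w
    by_contra hnot
    have extract : ∀ {x y : {Q : Finset V // IsMaximalClique G Q}} (w : T'.Walk x y),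
        s(q, D) ∉ w.edges → ∃ w' : T.Walk x y, s(C, D) ∉ w'.edges := by
      intro x y w
      induction w with
      | nil => intro _; exact ⟨SimpleGraph.Walk.nil, by simp⟩
      | @cons a b c h p ih =>
        intro hne
        have h1 : s(a, b) ≠ s(q, D) := fun hh =>
          hne (by rw [SimpleGraph.Walk.edges_cons, hh]; simp)
        have h2 : s(q, D) ∉ p.edges := fun hh => hne (by simp [SimpleGraph.Walk.edges_cons, hh])
        obtain ⟨w', hw'⟩ := ih h2
        rcases h with ⟨hTadj, hn⟩ | ⟨rfl, rfl⟩ | ⟨rfl, rfl⟩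
        · refine ⟨SimpleGraph.Walk.cons hTadj w', ?_⟩
          intro hh
          rw [SimpleGraph.Walk.edges_cons] at hh
          rcases List.mem_cons.1 hh with hh | hh
          · exact hn hh.symm
          · exact hw' hh
        · exact absurd rfl h1
        · exact absurd (Sym2.eq_swap) h1
    obtain ⟨w', hw'⟩ := extract w hnot
    have hp1e : s(C, D) ∉ (w'.toPath : T.Walk q D).edges :=
      fun h => hw' (SimpleGraph.Walk.edges_toPath_subset w' h)
    have hp₂ : (P.concat hCD).IsPath := by
      rw [SimpleGraph.Walk.isPath_def, SimpleGraph.Walk.support_concat]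
      rw [List.nodup_append]
      refine ⟨hPpath.support_nodup, List.nodup_singleton _, ?_⟩
      intro z hz z' hz' hzz'
      subst hzz'
      rw [List.mem_singleton] at hz'
      subst hz'
      exact hDP hz
    have heq := hacyc.path_unique w'.toPath ⟨P.concat hCD, hp₂⟩
    apply hp1e
    have heq' : (w'.toPath : T.Walk q D) = P.concat hCD := congrArg Subtype.val heq
    rw [heq', SimpleGraph.Walk.edges_concat]
    simp
  have hT'acyc : T'.IsAcyclic := by
    intro v c hc
    by_cases hmem : s(q, D) ∈ c.edges
    · exact (SimpleGraph.isBridge_iff_forall_cycle_notMem (c.edges_subset_edgeSet hmem)).1 hbridge c hc hmem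
    · have hce : ∀ e ∈ c.edges, e ∈ T.edgeSet := by
        intro e
        induction e using Sym2.ind with
        | _ x y =>
          intro he
          have hadj : T'.Adj x y := c.adj_of_mem_edges he
          rcases hadj with ⟨h1, _⟩ | ⟨rfl, rfl⟩ | ⟨rfl, rfl⟩
          · exact h1
          · exact absurd he hmem
          · exact absurd (by rwa [Sym2.eq_swap] at he) hmem
      exact hacyc (c.transfer T hce) (hc.transfer hce)
  have hT'ct : IsCliqueTree G T' := by
    refine ⟨⟨hT'conn, hT'acyc⟩, ?_⟩
    intro v
    have hconn := hT.2 v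
    haveI : Nonempty ↥({Q : {Q : Finset V // IsMaximalClique G Q} | v ∈ (Q : Finset V)}) :=
      hconn.nonempty
    by_cases hCDv : v ∈ (C : Finset V) ∧ v ∈ (D : Finset V)
    · have hqs : v ∈ (q : Finset V) := hCDint (Finset.mem_inter.2 ⟨hCDv.1, hCDv.2⟩)
      have hPs : ∀ z ∈ P.support, v ∈ (z : Finset V) := by
        obtain ⟨wqc⟩ := hconn.preconnected ⟨q, hqs⟩ ⟨C, hCDv.1⟩
        obtain ⟨p', hp'⟩ := induce_walk_spec wqc
        have heq := hacyc.path_unique p'.toPath ⟨P, hPpath⟩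
        have heq' : (p'.toPath : T.Walk q C) = P := congrArg Subtype.val heq
        intro z hz
        exact hp' z (SimpleGraph.Walk.support_toPath_subset p' (by rw [heq']; exact hz))
      have hCq' : (T'.induce {Q : {Q : Finset V // IsMaximalClique G Q} |
          v ∈ (Q : Finset V)}).Reachable ⟨q, hqs⟩ ⟨C, hCDv.1⟩ :=
        lift_avoid (fun h hne => hT'_of h hne) P hqs hCDv.1 hPedge hPs
      have hqD' : (T'.induce {Q : {Q : Finset V // IsMaximalClique G Q} |
          v ∈ (Q : Finset V)}).Adj ⟨q, hqs⟩ ⟨D, hCDv.2⟩ := hT'qD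
      have hCD' : (T'.induce {Q : {Q : Finset V // IsMaximalClique G Q} |
          v ∈ (Q : Finset V)}).Reachable ⟨C, hCDv.1⟩ ⟨D, hCDv.2⟩ :=
        hCq'.symm.trans hqD'.reachable
      refine ⟨fun x y => ?_⟩
      obtain ⟨w⟩ := hconn.preconnected x y
      refine reach_transform ?_ ⟨w⟩
      rintro ⟨a, ha⟩ ⟨b, hb⟩ hab
      have hab' : T.Adj a b := hab
      by_cases he : s(a, b) = s(C, D)
      · rw [Sym2.eq_iff] at he
        rcases he with ⟨rfl, rfl⟩ | ⟨rfl, rfl⟩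
        · exact hCD'
        · exact hCD'.symm
      · have hadj2 : (T'.induce {Q : {Q : Finset V // IsMaximalClique G Q} |
            v ∈ (Q : Finset V)}).Adj ⟨a, ha⟩ ⟨b, hb⟩ := hT'_of hab' he
        exact hadj2.reachable
    · refine ⟨fun x y => ?_⟩
      obtain ⟨w⟩ := hconn.preconnected x y
      refine reach_transform ?_ ⟨w⟩
      rintro ⟨a, ha⟩ ⟨b, hb⟩ hab
      have hab' : T.Adj a b := hab
      have he : s(a, b) ≠ s(C, D) := by
        intro h
        rw [Sym2.eq_iff] at h
        rcases h with ⟨rfl, rfl⟩ | ⟨rfl, rfl⟩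
        · exact hCDv ⟨ha, hb⟩
        · exact hCDv ⟨hb, ha⟩
      have hadj2 : (T'.induce {Q : {Q : Finset V // IsMaximalClique G Q} |
          v ∈ (Q : Finset V)}).Adj ⟨a, ha⟩ ⟨b, hb⟩ := hT'_of hab' he
      exact hadj2.reachable
  have hfin := huniq T' hT'ct
  rw [hfin] at hT'qD
  exact hqD hT'qD

end Rehang

end RanHelp
set_option maxHeartbeats 1000000 in
/-- If two degree-4 vertices of the clique-tree of a RAN are adjacent, then removing
`Q_i ∪ Q_j` leaves exactly 6 components, so `τ(G) ≤ 5/6 < 1`. -/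
theorem ran_adjacent_deg4 {V : Type*} [Fintype V] [DecidableEq V]
    (G : SimpleGraph V) (hG : IsRAN G)
    (T : SimpleGraph {Q : Finset V // IsMaximalClique G Q}) (hT : IsCliqueTree G T)
    (qi qj : {Q : Finset V // IsMaximalClique G Q}) (hadj : T.Adj qi qj)
    (hqi : deg T qi = 4) (hqj : deg T qj = 4) :
    compCount G ((qi : Finset V) ∪ (qj : Finset V)) = 6 ∧
      toughness G ≤ 5 / 6 ∧ (5 : ℝ≥0∞) / 6 < 1 := by
  classical
  obtain ⟨hKT, T₀, hT₀, huniq₀⟩ := hG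
  have huniq : ∀ T'' : SimpleGraph {Q : Finset V // IsMaximalClique G Q},
      IsCliqueTree G T'' → T'' = T :=
    fun T'' h => (huniq₀ T'' h).trans (huniq₀ T hT).symm
  have hTree := hT.1
  have hacyc := hTree.IsAcyclic
  set R : Finset V := (qi : Finset V) ∪ (qj : Finset V) with hRdef
  obtain ⟨hint3, hnadjij⟩ := RanHelp.edge_inter hKT hT hadj
  have hqi4 : (qi : Finset V).card = 4 := RanHelp.maxclique_card hKT qi.2
  have hqj4 : (qj : Finset V).card = 4 := RanHelp.maxclique_card hKT qj.2
  have hdiffi : ((qi : Finset V) \ (qj : Finset V)).card = 1 := by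
    have h1 := Finset.card_inter_add_card_sdiff (qi : Finset V) (qj : Finset V)
    omega
  have hdiffj : ((qj : Finset V) \ (qi : Finset V)).card = 1 := by
    have h1 := Finset.card_inter_add_card_sdiff (qj : Finset V) (qi : Finset V)
    rw [Finset.inter_comm] at h1
    omega
  have hR5 : R.card = 5 := by
    have h1 := Finset.card_union_add_card_inter (qi : Finset V) (qj : Finset V)
    rw [hRdef]
    omega
  obtain ⟨a₀, ha₀⟩ := Finset.card_eq_one.1 hdiffi
  obtain ⟨b₀, hb₀⟩ := Finset.card_eq_one.1 hdiffj
  have ha₀m : a₀ ∈ (qi : Finset V) \ (qj : Finset V) := by rw [ha₀]; simp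
  have hb₀m : b₀ ∈ (qj : Finset V) \ (qi : Finset V) := by rw [hb₀]; simp
  have ha₀i : a₀ ∈ (qi : Finset V) := (Finset.mem_sdiff.1 ha₀m).1
  have ha₀j : a₀ ∉ (qj : Finset V) := (Finset.mem_sdiff.1 ha₀m).2
  have hb₀j : b₀ ∈ (qj : Finset V) := (Finset.mem_sdiff.1 hb₀m).1
  have hb₀i : b₀ ∉ (qi : Finset V) := (Finset.mem_sdiff.1 hb₀m).2
  have hnadj : ¬ G.Adj a₀ b₀ := hnadjij a₀ ha₀i ha₀j b₀ hb₀j hb₀i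
  have hab₀ : a₀ ≠ b₀ := fun h => ha₀j (h ▸ hb₀j)
  -- Any clique inside R is inside one of the two cliques.
  have hcliqueR : ∀ N : Finset V, G.IsClique (N : Set V) → N ⊆ R →
      N ⊆ (qi : Finset V) ∨ N ⊆ (qj : Finset V) := by
    intro N hNc hNR
    by_cases hb : b₀ ∈ N
    · by_cases ha : a₀ ∈ N
      · exact absurd (hNc (by exact_mod_cast ha) (by exact_mod_cast hb) hab₀) hnadj
      · right
        intro x hx
        have hxR := hNR hx
        rw [hRdef, Finset.mem_union] at hxR
        rcases hxR with hxi | hxj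
        · by_contra hxj'
          have : x ∈ (qi : Finset V) \ (qj : Finset V) := Finset.mem_sdiff.2 ⟨hxi, hxj'⟩
          rw [ha₀] at this
          rw [Finset.mem_singleton] at this
          exact ha (this ▸ hx)
        · exact hxj
    · left
      intro x hx
      have hxR := hNR hx
      rw [hRdef, Finset.mem_union] at hxR
      rcases hxR with hxi | hxj
      · exact hxi
      · by_contra hxi'
        have : x ∈ (qj : Finset V) \ (qi : Finset V) := Finset.mem_sdiff.2 ⟨hxj, hxi'⟩
        rw [hb₀] at this
        rw [Finset.mem_singleton] at this
        exact hb (this ▸ hx)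
  have hclique_eqs : ∀ X : {Q : Finset V // IsMaximalClique G Q},
      (X : Finset V) ⊆ R → X = qi ∨ X = qj := by
    intro X hXR
    rcases hcliqueR X.1 X.2.1 hXR with h | h
    · exact Or.inl (Subtype.ext (X.2.2 _ qi.2.1 h ▸ (X.2.2 _ qi.2.1 h).symm ▸ (X.2.2 _ qi.2.1 h)))
    · exact Or.inr (Subtype.ext (X.2.2 _ qj.2.1 h))
  have hclique_not_sub : ∀ X : {Q : Finset V // IsMaximalClique G Q},
      X ≠ qi → X ≠ qj → ∃ x ∈ (X : Finset V), x ∉ R := by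
    intro X h1 h2
    have : ¬ (X : Finset V) ⊆ R := fun h => (hclique_eqs X h).elim h1 h2
    exact Finset.not_subset.1 this
  have hedge_w : ∀ X Y : {Q : Finset V // IsMaximalClique G Q}, T.Adj X Y →
      X ≠ qi → Y ≠ qi → X ≠ qj → Y ≠ qj →
      ∃ w, w ∈ (X : Finset V) ∩ (Y : Finset V) ∧ w ∉ R := by
    intro X Y hXY h1 h2 h3 h4
    have hns : ¬ ((X : Finset V) ∩ (Y : Finset V) ⊆ R) := by
      intro hsub
      have hc : G.IsClique (((X : Finset V) ∩ (Y : Finset V) : Finset V) : Set V) :=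
        X.2.1.subset (by intro z hz; exact_mod_cast Finset.inter_subset_left (by exact_mod_cast hz))
      rcases hcliqueR _ hc hsub with h | h
      · exact absurd (RanHelp.rehang hKT hT huniq hXY h1 h2 h) id
      · exact absurd (RanHelp.rehang hKT hT huniq hXY h3 h4 h) id
    obtain ⟨w, hw1, hw2⟩ := Finset.not_subset.1 hns
    exact ⟨w, hw1, hw2⟩
  set sK : Set {Q : Finset V // IsMaximalClique G Q} := {Q | Q ≠ qi ∧ Q ≠ qj} with hsKdef
  set TP := T.induce sK with hTPdef
  have hmem_sK : ∀ (v : V), v ∉ R → ∀ (X : {Q : Finset V // IsMaximalClique G Q}),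
      v ∈ (X : Finset V) → X ∈ sK := by
    intro v hv X hvX
    constructor
    · intro h; exact hv (by rw [hRdef, Finset.mem_union]; left; exact h ▸ hvX)
    · intro h; exact hv (by rw [hRdef, Finset.mem_union]; right; exact h ▸ hvX)
  have hW : ∀ (v : V), v ∉ R → ∀ (X Y : {Q : Finset V // IsMaximalClique G Q})
      (hXs : X ∈ sK) (hYs : Y ∈ sK), v ∈ (X : Finset V) → v ∈ (Y : Finset V) →
      TP.connectedComponentMk ⟨X, hXs⟩ = TP.connectedComponentMk ⟨Y, hYs⟩ := by
    intro v hv X Y hXs hYs hvX hvY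
    obtain ⟨w⟩ := (hT.2 v).preconnected ⟨X, hvX⟩ ⟨Y, hvY⟩
    obtain ⟨p, hp⟩ := RanHelp.induce_walk_spec w
    have hsup : ∀ z ∈ p.support, z ∈ sK := fun z hz => hmem_sK v hv z (hp z hz)
    exact SimpleGraph.ConnectedComponent.sound (RanHelp.walk_to_induce p hsup)
  set f : V → {Q : Finset V // IsMaximalClique G Q} := fun v =>
    ⟨(RanHelp.exists_max_clique_mem G v).choose,
      (RanHelp.exists_max_clique_mem G v).choose_spec.1⟩ with hfdef
  have hf : ∀ v, v ∈ (f v : Finset V) := fun v =>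
    (RanHelp.exists_max_clique_mem G v).choose_spec.2
  set Rc : Set V := ((R : Set V))ᶜ with hRcdef
  have hRc : ∀ x : ↥Rc, x.1 ∉ R := fun x h => x.2 h
  have hRcmem : ∀ x : V, x ∉ R → x ∈ Rc := fun x hx h => hx h
  set F : ↥Rc → TP.ConnectedComponent := fun x =>
    TP.connectedComponentMk ⟨f x.1, hmem_sK _ (hRc x) _ (hf x.1)⟩ with hFdef
  have hF : ∀ x y : ↥Rc, (G.induce Rc).Adj x y → F x = F y := by
    intro x y hxy
    have hadj' : G.Adj x.1 y.1 := hxy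
    obtain ⟨Q, hQ, hu, hv⟩ := RanHelp.exists_max_clique_pair G hadj'
    have h1 := hW x.1 (hRc x) (f x.1) ⟨Q, hQ⟩ (hmem_sK _ (hRc x) _ (hf x.1))
      (hmem_sK _ (hRc x) _ hu) (hf x.1) hu
    have h2 := hW y.1 (hRc y) (f y.1) ⟨Q, hQ⟩ (hmem_sK _ (hRc y) _ (hf y.1))
      (hmem_sK _ (hRc y) _ hv) (hf y.1) hv
    exact h1.trans h2.symm
  have hFr : ∀ x y : ↥Rc, (G.induce Rc).Reachable x y → F x = F y := by
    intro x y ⟨w⟩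
    induction w with
    | nil => rfl
    | cons h p ih => exact (hF _ _ h).trans ih
  set χ : (G.induce Rc).ConnectedComponent → TP.ConnectedComponent :=
    Quot.lift F (fun x y h => hFr x y h) with hχdef
  have hsc : ∀ (X : {Q : Finset V // IsMaximalClique G Q}) (x y : V)
      (hx : x ∈ (X : Finset V)) (hy : y ∈ (X : Finset V)) (hxR : x ∉ R) (hyR : y ∉ R),
      (G.induce Rc).Reachable ⟨x, hRcmem x hxR⟩ ⟨y, hRcmem y hyR⟩ := by
    intro X x y hx hy hxR hyR
    by_cases hxy : x = y
    · subst hxy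
      rfl
    · have hadj' : G.Adj x y := X.2.1 (by exact_mod_cast hx) (by exact_mod_cast hy) hxy
      have hadj2 : (G.induce Rc).Adj ⟨x, hRcmem x hxR⟩ ⟨y, hRcmem y hyR⟩ := hadj'
      exact hadj2.reachable
  have hwalkR : ∀ {X Y : {Q : Finset V // IsMaximalClique G Q}} (p : T.Walk X Y),
      (∀ z ∈ p.support, z ∈ sK) →
      ∀ x (hx : x ∈ (X : Finset V)) (hxR : x ∉ R) y (hy : y ∈ (Y : Finset V)) (hyR : y ∉ R),
        (G.induce Rc).Reachable ⟨x, hRcmem x hxR⟩ ⟨y, hRcmem y hyR⟩ := by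
    intro X Y p
    induction p with
    | nil =>
      intro _ x hx hxR y hy hyR
      exact hsc _ x y hx hy hxR hyR
    | @cons X Z Y h p ih =>
      intro hsup x hx hxR y hy hyR
      have hXs : X ∈ sK := hsup X (by simp)
      have hZs : Z ∈ sK := hsup Z (by simp)
      obtain ⟨w₀, hw₀, hw₀R⟩ := hedge_w X Z h hXs.1 hZs.1 hXs.2 hZs.2
      have h1 := hsc X x w₀ hx (Finset.mem_inter.1 hw₀).1 hxR hw₀R
      have h2 := ih (fun z hz => hsup z (by simp [hz])) w₀ (Finset.mem_inter.1 hw₀).2 hw₀R y hy hyR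
      exact h1.trans h2
  have hFH : ∀ {X Y : {Q : Finset V // IsMaximalClique G Q}} (w : T.Walk X Y) (hX : X ∈ sK),
      (∃ hY : Y ∈ sK, TP.Reachable ⟨X, hX⟩ ⟨Y, hY⟩) ∨
      (∃ (n : {Q : Finset V // IsMaximalClique G Q}) (hn : n ∈ sK),
        (T.Adj qi n ∨ T.Adj qj n) ∧ TP.Reachable ⟨X, hX⟩ ⟨n, hn⟩) := by
    intro X Y w
    induction w with
    | nil => intro hX; exact Or.inl ⟨hX, SimpleGraph.Reachable.refl _⟩
    | @cons X Z Y h p ih =>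
      intro hX
      by_cases hZ : Z ∈ sK
      · have hedge : TP.Adj ⟨X, hX⟩ ⟨Z, hZ⟩ := h
        rcases ih hZ with ⟨hY, r⟩ | ⟨n, hn, hadjn, r⟩
        · exact Or.inl ⟨hY, hedge.reachable.trans r⟩
        · exact Or.inr ⟨n, hn, hadjn, hedge.reachable.trans r⟩
      · have hZ' : Z = qi ∨ Z = qj := by
          by_contra hc
          push_neg at hc
          exact hZ ⟨hc.1, hc.2⟩
        rcases hZ' with rfl | rfl
        · exact Or.inr ⟨X, hX, Or.inl h.symm, SimpleGraph.Reachable.refl _⟩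
        · exact Or.inr ⟨X, hX, Or.inr h.symm, SimpleGraph.Reachable.refl _⟩
  -- the six neighbours
  set Ni : Finset {Q : Finset V // IsMaximalClique G Q} :=
    (Set.toFinite {r | T.Adj qi r}).toFinset with hNidef
  set Nj : Finset {Q : Finset V // IsMaximalClique G Q} :=
    (Set.toFinite {r | T.Adj qj r}).toFinset with hNjdef
  have hNi4 : Ni.card = 4 := by
    rw [hNidef, ← Set.ncard_eq_toFinset_card]
    exact hqi
  have hNj4 : Nj.card = 4 := by
    rw [hNjdef, ← Set.ncard_eq_toFinset_card]
    exact hqj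
  have hmemNi : ∀ r, r ∈ Ni ↔ T.Adj qi r := by
    intro r
    rw [hNidef, Set.Finite.mem_toFinset]
    rfl
  have hmemNj : ∀ r, r ∈ Nj ↔ T.Adj qj r := by
    intro r
    rw [hNjdef, Set.Finite.mem_toFinset]
    rfl
  set NNi := Ni.erase qj with hNNidef
  set NNj := Nj.erase qi with hNNjdef
  have hNNi3 : NNi.card = 3 := by
    rw [hNNidef, Finset.card_erase_of_mem ((hmemNi qj).2 hadj), hNi4]
  have hNNj3 : NNj.card = 3 := by
    rw [hNNjdef, Finset.card_erase_of_mem ((hmemNj qi).2 hadj.symm), hNj4]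
  have hdisj : Disjoint NNi NNj := by
    rw [Finset.disjoint_left]
    intro r hri hrj
    have h1 : T.Adj qi r := (hmemNi r).1 (Finset.mem_of_mem_erase hri)
    have h2 : T.Adj qj r := (hmemNj r).1 (Finset.mem_of_mem_erase hrj)
    have hrqj : r ≠ qj := Finset.ne_of_mem_erase hri
    have hrqi : r ≠ qi := Finset.ne_of_mem_erase hrj
    have hp2 : (SimpleGraph.Walk.cons h1 (SimpleGraph.Walk.cons h2.symm
        SimpleGraph.Walk.nil) : T.Walk qi qj).IsPath := by
      simp [SimpleGraph.Walk.isPath_def, h1.ne, hadj.ne, fun h => hrqj h]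
    have heq := hacyc.path_unique (SimpleGraph.Path.singleton hadj) ⟨_, hp2⟩
    have heq' : (SimpleGraph.Path.singleton hadj : T.Walk qi qj) =
        SimpleGraph.Walk.cons h1 (SimpleGraph.Walk.cons h2.symm SimpleGraph.Walk.nil) :=
      congrArg Subtype.val heq
    have hmem : s(qi, qj) ∈ (SimpleGraph.Walk.cons h1 (SimpleGraph.Walk.cons h2.symm
        SimpleGraph.Walk.nil) : T.Walk qi qj).edges := by
      rw [← heq']
      exact SimpleGraph.Path.mk'_mem_edges_singleton hadj
    simp only [SimpleGraph.Walk.edges_cons, SimpleGraph.Walk.edges_nil, List.mem_cons,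
      List.mem_singleton] at hmem
    rcases hmem with hmem | hmem | hmem
    · rw [Sym2.eq_iff] at hmem
      rcases hmem with ⟨_, h'⟩ | ⟨_, h'⟩
      · exact hrqj h'.symm
      · exact hadj.ne h'.symm
    · rw [Sym2.eq_iff] at hmem
      rcases hmem with ⟨h', _⟩ | ⟨h', _⟩
      · exact hrqi h'.symm
      · exact hadj.ne h'
    · simp at hmem
  set NN := NNi ∪ NNj with hNNdef
  have hNN6 : NN.card = 6 := by
    rw [hNNdef, Finset.card_union_of_disjoint hdisj, hNNi3, hNNj3]
  have hNNsK : ∀ n ∈ NN, n ∈ sK := by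
    intro n hn
    rw [hNNdef, Finset.mem_union] at hn
    rcases hn with hn | hn
    · exact ⟨((hmemNi n).1 (Finset.mem_of_mem_erase hn)).ne', Finset.ne_of_mem_erase hn⟩
    · exact ⟨Finset.ne_of_mem_erase hn, ((hmemNj n).1 (Finset.mem_of_mem_erase hn)).ne'⟩
  set ψ : {x // x ∈ NN} → TP.ConnectedComponent := fun n =>
    TP.connectedComponentMk ⟨n.1, hNNsK n.1 n.2⟩ with hψdef
  have hψinj : Function.Injective ψ := by
    intro n m hnm
    by_contra hne
    have hvalne : n.1 ≠ m.1 := fun h => hne (Subtype.ext h)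
    obtain ⟨w⟩ := SimpleGraph.ConnectedComponent.exact hnm
    obtain ⟨p, hp⟩ := RanHelp.induce_walk_spec w
    have hqip : qi ∉ p.support := fun h => (hp qi h).1 rfl
    have hqjp : qj ∉ p.support := fun h => (hp qj h).2 rfl
    have hmemn : n.1 ∈ NNi ∨ n.1 ∈ NNj := Finset.mem_union.1 n.2
    have hmemm : m.1 ∈ NNi ∨ m.1 ∈ NNj := Finset.mem_union.1 m.2
    have hnsK := hNNsK n.1 n.2
    have hmsK := hNNsK m.1 m.2
    obtain ⟨p2, hp2, hp2sup⟩ : ∃ p2 : T.Walk n.1 m.1, p2.IsPath ∧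
        (qi ∈ p2.support ∨ qj ∈ p2.support) := by
      rcases hmemn with hn | hn <;> rcases hmemm with hm | hm
      · have h1 : T.Adj qi n.1 := (hmemNi n.1).1 (Finset.mem_of_mem_erase hn)
        have h2 : T.Adj qi m.1 := (hmemNi m.1).1 (Finset.mem_of_mem_erase hm)
        refine ⟨SimpleGraph.Walk.cons h1.symm (SimpleGraph.Walk.cons h2
          SimpleGraph.Walk.nil), ?_, Or.inl (by simp)⟩
        simp [SimpleGraph.Walk.isPath_def, h1.ne', h2.ne, hvalne]
      · have h1 : T.Adj qi n.1 := (hmemNi n.1).1 (Finset.mem_of_mem_erase hn)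
        have h2 : T.Adj qj m.1 := (hmemNj m.1).1 (Finset.mem_of_mem_erase hm)
        refine ⟨SimpleGraph.Walk.cons h1.symm (SimpleGraph.Walk.cons hadj
          (SimpleGraph.Walk.cons h2 SimpleGraph.Walk.nil)), ?_, Or.inl (by simp)⟩
        have hnqj : n.1 ≠ qj := Finset.ne_of_mem_erase hn
        have hmqi : qi ≠ m.1 := fun h => (hNNsK m.1 m.2).1 h.symm
        simp [SimpleGraph.Walk.isPath_def, h1.ne', h2.ne, hvalne, hadj.ne, hnqj, hmqi]
      · have h1 : T.Adj qj n.1 := (hmemNj n.1).1 (Finset.mem_of_mem_erase hn)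
        have h2 : T.Adj qi m.1 := (hmemNi m.1).1 (Finset.mem_of_mem_erase hm)
        refine ⟨SimpleGraph.Walk.cons h1.symm (SimpleGraph.Walk.cons hadj.symm
          (SimpleGraph.Walk.cons h2 SimpleGraph.Walk.nil)), ?_, Or.inr (by simp)⟩
        have hnqi : n.1 ≠ qi := Finset.ne_of_mem_erase hn
        have hmqj : qj ≠ m.1 := fun h => (hNNsK m.1 m.2).2 h.symm
        simp [SimpleGraph.Walk.isPath_def, h1.ne', h2.ne, hvalne, hadj.ne', hnqi, hmqj]
      · have h1 : T.Adj qj n.1 := (hmemNj n.1).1 (Finset.mem_of_mem_erase hn)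
        have h2 : T.Adj qj m.1 := (hmemNj m.1).1 (Finset.mem_of_mem_erase hm)
        refine ⟨SimpleGraph.Walk.cons h1.symm (SimpleGraph.Walk.cons h2
          SimpleGraph.Walk.nil), ?_, Or.inr (by simp)⟩
        simp [SimpleGraph.Walk.isPath_def, h1.ne', h2.ne, hvalne]
    have heq := hacyc.path_unique p.toPath ⟨p2, hp2⟩
    have heq' : (p.toPath : T.Walk n.1 m.1) = p2 := congrArg Subtype.val heq
    rcases hp2sup with hs | hs
    · exact hqip (SimpleGraph.Walk.support_toPath_subset p (by rw [heq']; exact hs))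
    · exact hqjp (SimpleGraph.Walk.support_toPath_subset p (by rw [heq']; exact hs))
  have hψsurj : Function.Surjective ψ := by
    intro P
    refine SimpleGraph.ConnectedComponent.ind (fun x => ?_) P
    obtain ⟨X, hX⟩ := x
    obtain ⟨w⟩ := hTree.isConnected.preconnected X qi
    rcases hFH w hX with ⟨hY, r⟩ | ⟨n, hn, hadjn, r⟩
    · exact absurd rfl hY.1
    · have hnNN : n ∈ NN := by
        rw [hNNdef, Finset.mem_union]
        rcases hadjn with h | h
        · exact Or.inl (Finset.mem_erase.2 ⟨hn.2, (hmemNi n).2 h⟩)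
        · exact Or.inr (Finset.mem_erase.2 ⟨hn.1, (hmemNj n).2 h⟩)
      exact ⟨⟨n, hnNN⟩, SimpleGraph.ConnectedComponent.sound r.symm⟩
  have hχsurj : Function.Surjective χ := by
    intro P
    refine SimpleGraph.ConnectedComponent.ind (fun x => ?_) P
    obtain ⟨X, hX⟩ := x
    obtain ⟨x₀, hx₀X, hx₀R⟩ := hclique_not_sub X hX.1 hX.2
    refine ⟨(G.induce Rc).connectedComponentMk ⟨x₀, hRcmem x₀ hx₀R⟩, ?_⟩
    have : χ ((G.induce Rc).connectedComponentMk ⟨x₀, hRcmem x₀ hx₀R⟩) =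
        F ⟨x₀, hRcmem x₀ hx₀R⟩ := rfl
    rw [this, hFdef]
    exact hW x₀ hx₀R (f x₀) X (hmem_sK _ hx₀R _ (hf x₀)) hX (hf x₀) hx₀X
  have hχinj : Function.Injective χ := by
    intro c c'
    obtain ⟨x, rfl⟩ := Quot.exists_rep c
    obtain ⟨y, rfl⟩ := Quot.exists_rep c'
    intro h
    have hFxy : F x = F y := h
    obtain ⟨w⟩ := SimpleGraph.ConnectedComponent.exact hFxy
    obtain ⟨p, hp⟩ := RanHelp.induce_walk_spec w
    have hreach := hwalkR p hp x.1 (hf x.1) (hRc x) y.1 (hf y.1) (hRc y)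
    exact Quot.sound hreach
  have hcardPart : Nat.card TP.ConnectedComponent = 6 := by
    rw [← Nat.card_eq_of_bijective ψ ⟨hψinj, hψsurj⟩, Nat.card_eq_fintype_card,
      Fintype.card_coe, hNN6]
  have hcomp6 : compCount G R = 6 := by
    rw [compCount]
    rw [Nat.card_eq_of_bijective χ ⟨hχinj, hχsurj⟩]
    exact hcardPart
  refine ⟨hcomp6, ?_, ?_⟩
  · apply sSup_le
    intro t ht
    have h1 := ht R (by rw [hcomp6]; omega)
    rw [hcomp6, hR5] at h1
    have h2 : t * 6 ≤ 5 := by exact_mod_cast h1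
    exact (ENNReal.le_div_iff_mul_le (Or.inl (by norm_num)) (Or.inl (by norm_num))).2 h2
  · rw [ENNReal.div_lt_iff (Or.inl (by norm_num)) (Or.inl (by norm_num))]
    norm_num
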